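/- Let (w, m, α) be a magnetic weighted graph on a nonempty finite type V with n = |V| ≥ 2, and let v₁ ≠ v₂ in V. Let S = {φ ∈ ℂ^V : φ(v₁) = φ(v₂)}, an (n−1)-dimensional subspace, equipped with the restriction of the inner product ⟨φ,ψ⟩_m = Σ_v m v·φ(v)·conj(ψ(v)), and let Δ̃ be the compression of Δ(w,m,α) to S, i.e., the self-adjoint operator on S determined by ⟨Δ̃φ, ψ⟩_m = ⟨Δ(w,m,α)φ, ψ⟩_m for all φ, ψ ∈ S. Let μ_1 ≤ … ≤ μ_{n−1} be the eigenvalues of Δ̃ with multiplicity. Then λ_k(w,m,α) ≤ μ_k ≤ λ_{k+1}(w,m,α) for all 1 ≤ k ≤ n − 1. -/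

import Mathlib

open Matrix Polynomial in
private lemma charpoly_conj_eq' {n : Type} [Fintype n] [DecidableEq n]
    (M N A : Matrix n n ℂ) (h1 : M * N = 1) (h2 : N * M = 1) :
    (M * A * N).charpoly = A.charpoly := by
  have hM : charmatrix (M * A * N) = (M.map C) * charmatrix A * (N.map C) := by
    rw [charmatrix, charmatrix, RingHom.mapMatrix_apply, RingHom.mapMatrix_apply]
    rw [mul_sub, sub_mul]
    congr 1
    · have : (M.map C) * Matrix.scalar n (X : ℂ[X]) = Matrix.scalar n (X : ℂ[X]) * (M.map C) :=
        (scalar_commute (X : ℂ[X]) (fun r => Commute.all _ _) (M.map C)).symm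
      rw [this, mul_assoc, ← Matrix.map_mul, h1]
      simp
    · rw [← Matrix.map_mul, ← Matrix.map_mul]
  rw [Matrix.charpoly, hM, det_mul, det_mul, mul_comm, ← mul_assoc, ← det_mul, ← Matrix.map_mul, h2]
  simp [Matrix.charpoly]

open Matrix Polynomial in
private lemma charpoly_diagonal' {n : Type} [Fintype n] [DecidableEq n] (d : n → ℂ) :
    (diagonal d).charpoly = ∏ i, (X - C (d i)) := by
  rw [Matrix.charpoly, charmatrix, RingHom.mapMatrix_apply]
  rw [Matrix.scalar_apply, Matrix.diagonal_map (by simp), diagonal_sub, det_diagonal]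

private lemma multiset_sort_tuple' {V : Type} [Fintype V] (f : V → ℝ) :
    ∃ (g : Fin (Fintype.card V) → ℝ) (en : Fin (Fintype.card V) ≃ V),
      Monotone g ∧ (∀ i, f (en i) = g i) ∧
      ∀ (k : ℕ) (hk : k < Fintype.card V),
        ((Finset.univ.val.map f).sort (· ≤ ·)).getD k 0 = g ⟨k, hk⟩ := by
  classical
  set N := Fintype.card V
  let e0 : Fin N ≃ V := (Fintype.equivFin V).symm
  let σ := Tuple.sort (f ∘ e0)
  refine ⟨f ∘ e0 ∘ σ, σ.trans e0, Tuple.monotone_sort (f ∘ e0), fun i => rfl, ?_⟩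
  have hms : (Finset.univ.val.map f) = ↑(List.ofFn (f ∘ e0 ∘ σ)) := by
    have h1 : (Finset.univ : Finset V) = Finset.univ.map (σ.trans e0).toEmbedding :=
      (Finset.map_univ_equiv _).symm
    rw [h1, Finset.map_val, Multiset.map_map]
    have h2 : (Finset.univ : Finset (Fin N)).val = ↑(List.finRange N) := by
      simp [Finset.univ, Fintype.elems]
    rw [h2, Multiset.map_coe, ← List.ofFn_eq_map]
    rfl
  have hsort : (Finset.univ.val.map f).sort (· ≤ ·) = List.ofFn (f ∘ e0 ∘ σ) :=
    List.Perm.eq_of_pairwise'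
      (Multiset.pairwise_sort _ _)
      ((Tuple.monotone_sort (f ∘ e0)).sortedLE_ofFn.pairwise)
      (Multiset.coe_eq_coe.mp (by rw [Multiset.sort_eq, hms]))
  intro k hk
  rw [hsort, List.getD_eq_getElem _ _ (by simpa using hk), List.getElem_ofFn]

open Matrix in
private lemma exists_test_vector' {V V' : Type} [Fintype V] [Fintype V']
    [DecidableEq V] [DecidableEq V']
    (Q : Matrix V V' ℂ) (s : Finset V') (t : Finset V) (hcard : t.card < s.card) :
    ∃ x : V' → ℂ, x ≠ 0 ∧ (∀ j ∉ s, x j = 0) ∧ ∀ i ∈ t, (Q.mulVec x) i = 0 := by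
  classical
  let E : ({j // j ∈ s} → ℂ) →ₗ[ℂ] (V' → ℂ) :=
    { toFun := fun c j => if h : j ∈ s then c ⟨j, h⟩ else 0
      map_add' := by intro u v; funext j; by_cases h : j ∈ s <;> simp [h]
      map_smul' := by intro r u; funext j; by_cases h : j ∈ s <;> simp [h] }
  let F : ({j // j ∈ s} → ℂ) →ₗ[ℂ] ({i // i ∈ t} → ℂ) :=
    (LinearMap.funLeft ℂ ℂ (Subtype.val)) ∘ₗ Q.mulVecLin ∘ₗ E
  have hni : ¬ Function.Injective F := by
    intro hF
    have h := LinearMap.finrank_le_finrank_of_injective hF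
    rw [Module.finrank_pi, Module.finrank_pi, Fintype.card_coe, Fintype.card_coe] at h
    omega
  rw [← LinearMap.ker_eq_bot] at hni
  obtain ⟨c, hc, hc0⟩ := Submodule.ne_bot_iff _ |>.mp hni
  refine ⟨E c, ?_, ?_, ?_⟩
  · intro h0
    apply hc0
    funext j
    have := congrFun h0 j.val
    simpa [E, j.prop] using this
  · intro j hj
    simp [E, hj]
  · intro i hi
    have := congrFun (LinearMap.mem_ker.mp hc) ⟨i, hi⟩
    simpa [F, LinearMap.funLeft] using this

open Matrix in
private lemma core_le' {V V' : Type} [Fintype V] [Fintype V'] [DecidableEq V] [DecidableEq V']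
    (d : V → ℝ) (e : V' → ℝ) (Q : Matrix V V' ℂ)
    (hQ : Qᴴ * Q = 1)
    (hDe : diagonal (Complex.ofReal ∘ e) = Qᴴ * diagonal (Complex.ofReal ∘ d) * Q)
    (s : Finset V') (t : Finset V) (hcard : t.card < s.card)
    (a b : ℝ) (hes : ∀ j ∈ s, e j ≤ b) (hdt : ∀ i ∉ t, a ≤ d i) : a ≤ b := by
  classical
  obtain ⟨x, hx0, hxs, hxt⟩ := exists_test_vector' Q s t hcard
  set y := Q.mulVec x with hy
  have conj_form : ∀ {W : Type} [Fintype W] [DecidableEq W] (f : W → ℝ) (z : W → ℂ),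
      star z ⬝ᵥ (diagonal (Complex.ofReal ∘ f)).mulVec z
        = ((∑ i, f i * Complex.normSq (z i) : ℝ) : ℂ) := by
    intro W _ _ f z
    simp only [dotProduct, mulVec_diagonal, Function.comp_apply, Pi.star_apply,
      Complex.ofReal_sum]
    refine Finset.sum_congr rfl fun i _ => ?_
    rw [Complex.ofReal_mul, Complex.normSq_eq_conj_mul_self]
    simp only [RCLike.star_def]
    ring
  have key1 : star x ⬝ᵥ (diagonal (Complex.ofReal ∘ e)).mulVec x
      = star y ⬝ᵥ (diagonal (Complex.ofReal ∘ d)).mulVec y := by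
    rw [hDe, hy, Matrix.star_mulVec, ← Matrix.mulVec_mulVec, ← Matrix.mulVec_mulVec,
      Matrix.dotProduct_mulVec (star x) Qᴴ]
  have key2 : star x ⬝ᵥ x = star y ⬝ᵥ y := by
    rw [hy, Matrix.star_mulVec, Matrix.dotProduct_mulVec, Matrix.vecMul_vecMul,
      ← Matrix.dotProduct_mulVec, hQ, Matrix.one_mulVec]
  have norm_form : ∀ {W : Type} [Fintype W] (z : W → ℂ),
      star z ⬝ᵥ z = ((∑ i, Complex.normSq (z i) : ℝ) : ℂ) := by
    intro W _ z
    simp only [dotProduct, Pi.star_apply, Complex.ofReal_sum]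
    refine Finset.sum_congr rfl fun i _ => ?_
    rw [Complex.normSq_eq_conj_mul_self]
    simp [RCLike.star_def]
  have hsum : (∑ j, e j * Complex.normSq (x j)) = ∑ i, d i * Complex.normSq (y i) := by
    have := key1
    rw [conj_form e x, conj_form d y] at this
    exact_mod_cast this
  have hnorm : (∑ j, Complex.normSq (x j)) = ∑ i, Complex.normSq (y i) := by
    have := key2
    rw [norm_form x, norm_form y] at this
    exact_mod_cast this
  set X := ∑ j, Complex.normSq (x j) with hX
  have hXpos : 0 < X := by
    obtain ⟨j, hj⟩ := Function.ne_iff.mp hx0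
    exact Finset.sum_pos' (fun j _ => Complex.normSq_nonneg _)
      ⟨j, Finset.mem_univ _, Complex.normSq_pos.mpr (by simpa using hj)⟩
  have hub : (∑ j, e j * Complex.normSq (x j)) ≤ b * X := by
    rw [hX, Finset.mul_sum]
    refine Finset.sum_le_sum fun j _ => ?_
    by_cases hj : j ∈ s
    · exact mul_le_mul_of_nonneg_right (hes j hj) (Complex.normSq_nonneg _)
    · rw [hxs j hj]; simp
  have hlb : a * X ≤ ∑ i, d i * Complex.normSq (y i) := by
    rw [hnorm, Finset.mul_sum]
    refine Finset.sum_le_sum fun i _ => ?_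
    by_cases hi : i ∈ t
    · rw [hxt i hi]; simp
    · exact mul_le_mul_of_nonneg_right (hdt i hi) (Complex.normSq_nonneg _)
  have : a * X ≤ b * X := by
    calc a * X ≤ ∑ i, d i * Complex.normSq (y i) := hlb
    _ = ∑ j, e j * Complex.normSq (x j) := hsum.symm
    _ ≤ b * X := hub
  exact le_of_mul_le_mul_right (by simpa [mul_comm] using this) hXpos

open Matrix in
private lemma diag_interlace' {V V' : Type} [Fintype V] [Fintype V']
    [DecidableEq V] [DecidableEq V']
    (d : V → ℝ) (e : V' → ℝ) (Q : Matrix V V' ℂ)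
    (hQ : Qᴴ * Q = 1)
    (hDe : diagonal (Complex.ofReal ∘ e) = Qᴴ * diagonal (Complex.ofReal ∘ d) * Q)
    (D : Fin (Fintype.card V) → ℝ) (E : Fin (Fintype.card V') → ℝ)
    (enD : Fin (Fintype.card V) ≃ V) (enE : Fin (Fintype.card V') ≃ V')
    (hD : Monotone D) (hE : Monotone E)
    (hdD : ∀ i, d (enD i) = D i) (heE : ∀ i, e (enE i) = E i)
    (hcard : Fintype.card V' + 1 = Fintype.card V)
    (k : ℕ) (hk : k < Fintype.card V') (hk1 : k + 1 < Fintype.card V) :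
    D ⟨k, by omega⟩ ≤ E ⟨k, hk⟩ ∧ E ⟨k, hk⟩ ≤ D ⟨k + 1, hk1⟩ := by
  classical
  have hinjE : ∀ {M : ℕ} (f : Fin M → Fin (Fintype.card V')),
      Function.Injective f → Function.Injective (fun j => enE (f j)) :=
    fun f hf => enE.injective.comp hf
  have hinjD : ∀ {M : ℕ} (f : Fin M → Fin (Fintype.card V)),
      Function.Injective f → Function.Injective (fun j => enD (f j)) :=
    fun f hf => enD.injective.comp hf
  constructor
  · set s : Finset V' :=
      Finset.image (fun j : Fin (k+1) => enE ⟨j.val, by omega⟩) Finset.univ with hs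
    set t : Finset V :=
      Finset.image (fun j : Fin k => enD ⟨j.val, by omega⟩) Finset.univ with ht
    have hscard : s.card = k + 1 := by
      rw [hs, Finset.card_image_of_injective _
        (hinjE _ (fun a b hab => by simpa [Fin.ext_iff] using hab))]
      simp
    have htcard : t.card = k := by
      rw [ht, Finset.card_image_of_injective _
        (hinjD _ (fun a b hab => by simpa [Fin.ext_iff] using hab))]
      simp
    refine core_le' d e Q hQ hDe s t (by omega) _ _ ?_ ?_
    · intro j hj
      obtain ⟨j', _, rfl⟩ := Finset.mem_image.mp hj
      rw [heE]
      exact hE (by rw [Fin.le_def]; exact Nat.lt_succ_iff.mp j'.isLt)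
    · intro i hit
      have hge : ¬ (enD.symm i).val < k := by
        intro hlt
        refine hit (Finset.mem_image.mpr ⟨⟨(enD.symm i).val, hlt⟩, Finset.mem_univ _, ?_⟩)
        simp
      have h1 : d i = D (enD.symm i) := by
        rw [← hdD (enD.symm i), Equiv.apply_symm_apply]
      have h2 : D ⟨k, by omega⟩ ≤ D (enD.symm i) :=
        hD (by rw [Fin.le_def]; exact le_of_not_gt hge)
      rw [h1]; exact h2
  · have hDe' : diagonal (Complex.ofReal ∘ (fun j => - e j))
        = Qᴴ * diagonal (Complex.ofReal ∘ (fun i => - d i)) * Q := by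
      have h1 : diagonal (Complex.ofReal ∘ fun j => -e j)
          = -(diagonal (Complex.ofReal ∘ e)) := by
        ext i j; by_cases h : i = j <;> simp [diagonal_apply, h]
      have h2 : diagonal (Complex.ofReal ∘ fun i => -d i)
          = -(diagonal (Complex.ofReal ∘ d)) := by
        ext i j; by_cases h : i = j <;> simp [diagonal_apply, h]
      rw [h1, h2, hDe, Matrix.mul_neg, Matrix.neg_mul]
    set s : Finset V' :=
      Finset.image (fun j : Fin (Fintype.card V' - k) => enE ⟨k + j.val, by omega⟩)
        Finset.univ with hs
    set t : Finset V :=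
      Finset.image (fun j : Fin (Fintype.card V - (k+2)) => enD ⟨k + 2 + j.val, by omega⟩)
        Finset.univ with ht
    have hscard : s.card = Fintype.card V' - k := by
      rw [hs, Finset.card_image_of_injective _
        (hinjE _ (fun a b hab => by simpa [Fin.ext_iff] using hab))]
      simp
    have htcard : t.card = Fintype.card V - (k + 2) := by
      rw [ht, Finset.card_image_of_injective _
        (hinjD _ (fun a b hab => by simpa [Fin.ext_iff] using hab))]
      simp
    have key : - D ⟨k + 1, hk1⟩ ≤ - E ⟨k, hk⟩ := by
      refine core_le' (fun i => - d i) (fun j => - e j) Q hQ hDe' s t (by omega) _ _ ?_ ?_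
      · intro j hj
        obtain ⟨j', _, rfl⟩ := Finset.mem_image.mp hj
        show - e (enE ⟨k + j'.val, _⟩) ≤ - E ⟨k, hk⟩
        rw [heE]
        exact neg_le_neg (hE (by rw [Fin.le_def]; exact Nat.le_add_right _ _))
      · intro i hit
        have hlt : ¬ k + 2 ≤ (enD.symm i).val := by
          intro hge
          refine hit (Finset.mem_image.mpr ⟨⟨(enD.symm i).val - (k+2), by omega⟩,
            Finset.mem_univ _, ?_⟩)
          have : (⟨k + 2 + ((enD.symm i).val - (k+2)), by omega⟩ : Fin (Fintype.card V))
              = enD.symm i := by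
            rw [Fin.ext_iff]; show k + 2 + _ = _; omega
          rw [this]; simp
        have h1 : d i = D (enD.symm i) := by
          rw [← hdD (enD.symm i), Equiv.apply_symm_apply]
        have h2 : D (enD.symm i) ≤ D ⟨k + 1, hk1⟩ :=
          hD (by rw [Fin.le_def]; show (enD.symm i).val ≤ k + 1; omega)
        show - D ⟨k + 1, hk1⟩ ≤ - d i
        rw [h1]; exact neg_le_neg h2
    linarith

/-- The magnetic weighted Laplacian `Δ(w,m,α)` as a matrix acting on `ℂ^V`:
`(Δφ)(v) = (1/m v) · Σ_u w v u · (φ(v) − exp(i·α v u)·φ(u))`. -/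
noncomputable def magLap {V : Type} [Fintype V] [DecidableEq V]
    (w : V → V → ℝ) (m : V → ℝ) (α : V → V → ℝ) : Matrix V V ℂ :=
  fun v u => (if v = u then (((∑ u', w v u') / m v : ℝ) : ℂ) else 0)
    - ((w v u / m v : ℝ) : ℂ) * Complex.exp (Complex.I * (α v u : ℝ))

/-- The eigenvalues (with multiplicity, nondecreasing) of a matrix with real
spectrum: real parts of the roots of the characteristic polynomial, sorted;
`lamk A k` is the `(k+1)`-st smallest (0-based index). -/
noncomputable def lamk {V : Type} [Fintype V] [DecidableEq V] (A : Matrix V V ℂ) (k : ℕ) : ℝ :=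
  ((A.charpoly.roots.map Complex.re).sort (· ≤ ·)).getD k 0

/-- The isomorphism from `ℂ^{V ∖ {v₂}}` onto the subspace
`S = {φ : φ(v₁) = φ(v₂)}` of `ℂ^V`. -/
noncomputable def liftFun {V : Type} [DecidableEq V] {v₁ v₂ : V} (hv : v₁ ≠ v₂)
    (ψ : {v : V // v ≠ v₂} → ℂ) : V → ℂ :=
  fun v => if h : v = v₂ then ψ ⟨v₁, hv⟩ else ψ ⟨v, h⟩

open Matrix Polynomial in
private lemma lamk_of_diag' {V : Type} [Fintype V] [DecidableEq V] (A : Matrix V V ℂ) (f : V → ℝ)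
    (M Minv : Matrix V V ℂ) (h1 : M * Minv = 1) (h2 : Minv * M = 1)
    (hA : A = M * diagonal (Complex.ofReal ∘ f) * Minv) :
    ∃ (g : Fin (Fintype.card V) → ℝ) (en : Fin (Fintype.card V) ≃ V),
      Monotone g ∧ (∀ i, f (en i) = g i) ∧
      ∀ (k : ℕ) (hk : k < Fintype.card V), lamk A k = g ⟨k, hk⟩ := by
  have hcp : A.charpoly = ∏ i, (X - C ((f i : ℂ))) := by
    rw [hA, charpoly_conj_eq' _ _ _ h1 h2, charpoly_diagonal']
    rfl
  have hroots : A.charpoly.roots = Finset.univ.val.map (fun i => ((f i : ℂ))) := by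
    rw [hcp]
    have : (∏ i, (X - C ((f i : ℂ)))) =
        ((Finset.univ.val.map (fun i => ((f i : ℂ)))).map (fun a => X - C a)).prod := by
      rw [Multiset.map_map]
      rfl
    rw [this, roots_multiset_prod_X_sub_C]
  have hre : A.charpoly.roots.map Complex.re = Finset.univ.val.map f := by
    rw [hroots, Multiset.map_map]
    congr 1
  obtain ⟨g, en, hg, hfg, hsort⟩ := multiset_sort_tuple' f
  exact ⟨g, en, hg, hfg, fun k hk => by rw [lamk, hre, hsort k hk]⟩

open Matrix in
private lemma pairing_ext' {n : Type} [Fintype n] [DecidableEq n] (M N : Matrix n n ℂ)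
    (h : ∀ ψ χ : n → ℂ, star χ ⬝ᵥ (M *ᵥ ψ) = star χ ⬝ᵥ (N *ᵥ ψ)) : M = N := by
  ext i j
  have := h (Pi.single j 1) (Pi.single i 1)
  simpa [dotProduct, Pi.single_apply, apply_ite, Finset.sum_ite_eq] using this

private lemma card_ne_succ' (V : Type) [Fintype V] [DecidableEq V] (v₂ : V) :
    Fintype.card {v : V // v ≠ v₂} + 1 = Fintype.card V := by
  have h1 : Fintype.card {v : V // ¬ (v = v₂)}
      = Fintype.card V - Fintype.card {v : V // v = v₂} := Fintype.card_subtype_compl _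
  have h2 : Fintype.card {v : V // v = v₂} = 1 := Fintype.card_subtype_eq v₂
  have h3 : 1 ≤ Fintype.card V := Fintype.card_pos_iff.mpr ⟨v₂⟩
  have h4 : Fintype.card {v : V // v ≠ v₂} = Fintype.card {v : V // ¬ (v = v₂)} := rfl
  omega

private noncomputable def mprime {V : Type} [DecidableEq V] (m : V → ℝ) (v₁ v₂ : V) :
    {v : V // v ≠ v₂} → ℝ :=
  fun j => m j.val + if j.val = v₁ then m v₂ else 0

private lemma merge_sum' {V : Type} [Fintype V] [DecidableEq V] {v₁ v₂ : V} (hv : v₁ ≠ v₂)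
    (m : V → ℝ) (a b : {v : V // v ≠ v₂} → ℂ) :
    ∑ v : V, (m v : ℂ) * liftFun hv a v * star (liftFun hv b v)
      = ∑ j : {v : V // v ≠ v₂}, (mprime m v₁ v₂ j : ℂ) * a j * star (b j) := by
  classical
  set f : V → ℂ := fun v => (m v : ℂ) * liftFun hv a v * star (liftFun hv b v) with hf
  have hsplit : ∑ v : V, f v = f v₂ + ∑ v ∈ Finset.univ.erase v₂, f v :=
    (Finset.add_sum_erase _ f (Finset.mem_univ v₂)).symm
  have hsub : ∑ v ∈ Finset.univ.erase v₂, f v = ∑ j : {v : V // v ≠ v₂}, f j.val :=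
    Finset.sum_subtype _ (fun x => by simp) f
  have hfval : ∀ j : {v : V // v ≠ v₂}, f j.val = (m j.val : ℂ) * a j * star (b j) := by
    intro j
    rw [hf]
    simp only [liftFun, dif_neg j.prop, Subtype.coe_eta]
  have hfv₂ : f v₂ = (m v₂ : ℂ) * a ⟨v₁, hv⟩ * star (b ⟨v₁, hv⟩) := by
    rw [hf]
    simp [liftFun]
  have hrhs : ∑ j : {v : V // v ≠ v₂}, (mprime m v₁ v₂ j : ℂ) * a j * star (b j)
      = (∑ j : {v : V // v ≠ v₂}, (m j.val : ℂ) * a j * star (b j))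
        + (m v₂ : ℂ) * a ⟨v₁, hv⟩ * star (b ⟨v₁, hv⟩) := by
    have hterm : ∀ j : {v : V // v ≠ v₂}, (mprime m v₁ v₂ j : ℂ) * a j * star (b j)
        = (m j.val : ℂ) * a j * star (b j)
          + (if j = ⟨v₁, hv⟩ then (m v₂ : ℂ) * a j * star (b j) else 0) := by
      intro j
      by_cases h : j = (⟨v₁, hv⟩ : {v : V // v ≠ v₂})
      · subst h
        simp only [mprime, if_pos rfl, if_pos rfl]
        push_cast
        ring
      · have h' : j.val ≠ v₁ := fun hc => h (Subtype.ext hc)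
        simp only [mprime, if_neg h, if_neg h']
        push_cast
        ring
    rw [Finset.sum_congr rfl (fun j _ => hterm j), Finset.sum_add_distrib,
      Finset.sum_ite_eq' Finset.univ (⟨v₁, hv⟩ : {v : V // v ≠ v₂})]
    simp
  rw [hsplit, hsub, hrhs, hfv₂, Finset.sum_congr rfl (fun j _ => hfval j)]
  ring

open Matrix in
private lemma herm_H' {V : Type} [Fintype V] [DecidableEq V]
    (w : V → V → ℝ) (m : V → ℝ) (α : V → V → ℝ)
    (hw_symm : ∀ v u, w v u = w u v) (hw_diag : ∀ v, w v v = 0) (hm : ∀ v, 0 < m v)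
    (hα : ∀ v u, α v u = - α u v) :
    (diagonal (fun v => (Real.sqrt (m v) : ℂ)) * magLap w m α *
      diagonal (fun v => ((Real.sqrt (m v))⁻¹ : ℂ))).IsHermitian := by
  have hsq : ∀ v, Real.sqrt (m v) * Real.sqrt (m v) = m v := fun v =>
    Real.mul_self_sqrt (hm v).le
  have hpos : ∀ v, (0:ℝ) < Real.sqrt (m v) := fun v => Real.sqrt_pos.mpr (hm v)
  have hsqC : ∀ v, ((Real.sqrt (m v) : ℂ)) * ((Real.sqrt (m v) : ℂ)) = ((m v : ℝ) : ℂ) := by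
    intro v
    rw [← Complex.ofReal_mul, hsq]
  have hsne : ∀ v, ((Real.sqrt (m v) : ℂ)) ≠ 0 := fun v => by
    simpa using (hpos v).ne'
  have hmne : ∀ v, ((m v : ℝ) : ℂ) ≠ 0 := fun v => by
    simpa using (hm v).ne'
  have hΔ : ∀ a b : V, a ≠ b →
      magLap w m α a b = -(((w a b / m a : ℝ) : ℂ) * Complex.exp (Complex.I * (α a b : ℝ))) := by
    intro a b hab
    simp [magLap, hab]
  have hent : ∀ i j, (diagonal (fun v => (Real.sqrt (m v) : ℂ)) * magLap w m α *
      diagonal (fun v => ((Real.sqrt (m v))⁻¹ : ℂ))) i j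
      = (Real.sqrt (m i) : ℂ) * magLap w m α i j * ((Real.sqrt (m j))⁻¹ : ℂ) := by
    intro i j
    rw [Matrix.mul_diagonal, Matrix.diagonal_mul]
  rw [Matrix.IsHermitian]
  ext i j
  rw [conjTranspose_apply, hent, hent]
  by_cases hij : i = j
  · subst hij
    have : magLap w m α i i = (((∑ u', w i u') / m i : ℝ) : ℂ) := by
      simp [magLap, hw_diag i]
    rw [this]
    simp [Complex.conj_ofReal, ← Complex.ofReal_inv, ← Complex.ofReal_mul]
  · have hexp : (starRingEnd ℂ) (Complex.exp (Complex.I * (α j i : ℝ)))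
        = Complex.exp (Complex.I * (α i j : ℝ)) := by
      rw [← Complex.exp_conj]
      congr 1
      rw [_root_.map_mul, Complex.conj_I, Complex.conj_ofReal, hα j i]
      push_cast
      ring
    rw [hΔ j i (Ne.symm hij), hΔ i j hij, hw_symm j i]
    push_cast
    simp only [star_mul', star_neg, star_inv₀, RCLike.star_def, map_div₀, _root_.map_mul,
      Complex.conj_ofReal, hexp]
    rw [← hsqC i, ← hsqC j]
    field_simp [hsne i, hsne j]

private noncomputable def Lmat {V : Type} [Fintype V] [DecidableEq V] {v₁ v₂ : V}
    (hv : v₁ ≠ v₂) : Matrix V {v : V // v ≠ v₂} ℂ :=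
  fun v j => if h : v = v₂ then (if j = ⟨v₁, hv⟩ then 1 else 0) else (if j = ⟨v, h⟩ then 1 else 0)

open Matrix in
private lemma Lmat_mulVec' {V : Type} [Fintype V] [DecidableEq V] {v₁ v₂ : V} (hv : v₁ ≠ v₂)
    (ψ : {v : V // v ≠ v₂} → ℂ) : Lmat hv *ᵥ ψ = liftFun hv ψ := by
  funext v
  simp only [Matrix.mulVec, dotProduct, Lmat, liftFun]
  by_cases h : v = v₂
  · simp [h, ite_mul, Finset.sum_ite_eq]
  · simp [h, ite_mul, Finset.sum_ite_eq]


open Matrix in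
private lemma weighted_dot' {V : Type} [Fintype V] [DecidableEq V] (m : V → ℝ)
    (hm : ∀ v, 0 < m v) (a b : V → ℂ) :
    star (diagonal (fun v => (Real.sqrt (m v) : ℂ)) *ᵥ a)
      ⬝ᵥ (diagonal (fun v => (Real.sqrt (m v) : ℂ)) *ᵥ b)
      = ∑ v, (m v : ℂ) * b v * star (a v) := by
  simp only [dotProduct, Pi.star_apply, mulVec_diagonal]
  refine Finset.sum_congr rfl fun v _ => ?_
  have hsq : ((Real.sqrt (m v) : ℂ)) * ((Real.sqrt (m v) : ℂ)) = ((m v : ℝ) : ℂ) := by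
    rw [← Complex.ofReal_mul, Real.mul_self_sqrt (hm v).le]
  rw [star_mul', RCLike.star_def, Complex.conj_ofReal, ← hsq]
  ring

open Matrix in
private lemma helper1' {W : Type} [Fintype W] [DecidableEq W] (r : W → ℝ) (hr : ∀ j, 0 < r j)
    (x y : W → ℂ) :
    ∑ j, (r j : ℂ) * (((Real.sqrt (r j))⁻¹ : ℂ) * x j)
        * star (((Real.sqrt (r j))⁻¹ : ℂ) * y j)
      = ∑ j, star (y j) * x j := by
  refine Finset.sum_congr rfl fun j _ => ?_
  have hsq : ((Real.sqrt (r j) : ℂ)) * ((Real.sqrt (r j) : ℂ)) = ((r j : ℝ) : ℂ) := by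
    rw [← Complex.ofReal_mul, Real.mul_self_sqrt (hr j).le]
  have hne : ((Real.sqrt (r j) : ℂ)) ≠ 0 := by
    simpa using (Real.sqrt_pos.mpr (hr j)).ne'
  rw [star_mul', RCLike.star_def, map_inv₀, Complex.conj_ofReal, ← hsq]
  field_simp

open Matrix in
private lemma helper2' {W : Type} [Fintype W] [DecidableEq W] (r : W → ℝ) (hr : ∀ j, 0 < r j)
    (z y : W → ℂ) :
    ∑ j, (r j : ℂ) * z j * star (((Real.sqrt (r j))⁻¹ : ℂ) * y j)
      = ∑ j, star (y j) * ((Real.sqrt (r j) : ℂ) * z j) := by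
  refine Finset.sum_congr rfl fun j _ => ?_
  have hsq : ((Real.sqrt (r j) : ℂ)) * ((Real.sqrt (r j) : ℂ)) = ((r j : ℝ) : ℂ) := by
    rw [← Complex.ofReal_mul, Real.mul_self_sqrt (hr j).le]
  have hne : ((Real.sqrt (r j) : ℂ)) ≠ 0 := by
    simpa using (Real.sqrt_pos.mpr (hr j)).ne'
  rw [star_mul', RCLike.star_def, map_inv₀, Complex.conj_ofReal, ← hsq]
  field_simp

open Matrix

/-- contracting two vertices in the measure-preserving sense:
the eigenvalues `μ_k` of the compression `Δ̃` of `Δ(w,m,α)` to the subspace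
`S = {φ : φ(v₁) = φ(v₂)}` (with the weighted inner product `⟨·,·⟩_m`)
interlace the eigenvalues of `Δ(w,m,α)`: `λ_k ≤ μ_k ≤ λ_{k+1}`.  Here `S` is
coordinatised by `ℂ^{V ∖ {v₂}}` via `liftFun`, and the compression is any
matrix `B` with `⟨L(Bψ), Lχ⟩_m = ⟨Δ(Lψ), Lχ⟩_m` for all `ψ, χ`. -/
theorem stmt13 {V : Type} [Fintype V] [DecidableEq V] [Nonempty V]
    (hn : 2 ≤ Fintype.card V)
    (w : V → V → ℝ) (m : V → ℝ) (α : V → V → ℝ)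
    (hw_symm : ∀ v u, w v u = w u v) (hw_nonneg : ∀ v u, 0 ≤ w v u)
    (hw_diag : ∀ v, w v v = 0) (hm : ∀ v, 0 < m v)
    (hα : ∀ v u, α v u = - α u v)
    (v₁ v₂ : V) (hv : v₁ ≠ v₂)
    (B : Matrix {v : V // v ≠ v₂} {v : V // v ≠ v₂} ℂ)
    (hB : ∀ ψ χ : {v : V // v ≠ v₂} → ℂ,
      (∑ v : V, (m v : ℂ) * liftFun hv (B.mulVec ψ) v * star (liftFun hv χ v))
        = ∑ v : V, (m v : ℂ) * (magLap w m α).mulVec (liftFun hv ψ) v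
            * star (liftFun hv χ v)) :
    ∀ k : ℕ, 1 ≤ k → k ≤ Fintype.card V - 1 →
      lamk (magLap w m α) (k - 1) ≤ lamk B (k - 1)
      ∧ lamk B (k - 1) ≤ lamk (magLap w m α) k := by

  classical
  have hcardV' : Fintype.card {v : V // v ≠ v₂} + 1 = Fintype.card V := card_ne_succ' V v₂
  have hm' : ∀ j : {v : V // v ≠ v₂}, 0 < mprime m v₁ v₂ j := by
    intro j
    by_cases h : j.val = v₁
    · simp only [mprime, if_pos h]
      have := hm j.val
      have := hm v₂
      linarith
    · simp only [mprime, if_neg h]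
      simpa using hm j.val
  -- notation
  have hsneV : ∀ v, ((Real.sqrt (m v) : ℂ)) ≠ 0 := fun v => by
    simpa using (Real.sqrt_pos.mpr (hm v)).ne'
  have hsneW : ∀ j : {v : V // v ≠ v₂}, ((Real.sqrt (mprime m v₁ v₂ j) : ℂ)) ≠ 0 := fun j => by
    simpa using (Real.sqrt_pos.mpr (hm' j)).ne'
  have hDVVi : diagonal (fun v => (Real.sqrt (m v) : ℂ))
      * diagonal (fun v => ((Real.sqrt (m v))⁻¹ : ℂ)) = 1 := by
    rw [Matrix.diagonal_mul_diagonal,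
      show (fun v => (Real.sqrt (m v) : ℂ) * ((Real.sqrt (m v))⁻¹ : ℂ)) = fun _ => (1:ℂ)
        from funext fun v => mul_inv_cancel₀ (hsneV v), Matrix.diagonal_one]
  have hDViV : diagonal (fun v => ((Real.sqrt (m v))⁻¹ : ℂ))
      * diagonal (fun v => (Real.sqrt (m v) : ℂ)) = 1 := by
    rw [Matrix.diagonal_mul_diagonal,
      show (fun v => ((Real.sqrt (m v))⁻¹ : ℂ) * (Real.sqrt (m v) : ℂ)) = fun _ => (1:ℂ)
        from funext fun v => inv_mul_cancel₀ (hsneV v), Matrix.diagonal_one]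
  have hDWWi : diagonal (fun j : {v : V // v ≠ v₂} => (Real.sqrt (mprime m v₁ v₂ j) : ℂ))
      * diagonal (fun j => ((Real.sqrt (mprime m v₁ v₂ j))⁻¹ : ℂ)) = 1 := by
    rw [Matrix.diagonal_mul_diagonal,
      show (fun j : {v : V // v ≠ v₂} =>
          (Real.sqrt (mprime m v₁ v₂ j) : ℂ) * ((Real.sqrt (mprime m v₁ v₂ j))⁻¹ : ℂ))
        = fun _ => (1:ℂ) from funext fun j => mul_inv_cancel₀ (hsneW j), Matrix.diagonal_one]
  have hDWiW : diagonal (fun j : {v : V // v ≠ v₂} => ((Real.sqrt (mprime m v₁ v₂ j))⁻¹ : ℂ))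
      * diagonal (fun j => (Real.sqrt (mprime m v₁ v₂ j) : ℂ)) = 1 := by
    rw [Matrix.diagonal_mul_diagonal,
      show (fun j : {v : V // v ≠ v₂} =>
          ((Real.sqrt (mprime m v₁ v₂ j))⁻¹ : ℂ) * (Real.sqrt (mprime m v₁ v₂ j) : ℂ))
        = fun _ => (1:ℂ) from funext fun j => inv_mul_cancel₀ (hsneW j), Matrix.diagonal_one]
  obtain ⟨H, hHdef⟩ : ∃ H : Matrix V V ℂ, H = diagonal (fun v => (Real.sqrt (m v) : ℂ))
      * magLap w m α * diagonal (fun v => ((Real.sqrt (m v))⁻¹ : ℂ)) := ⟨_, rfl⟩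
  have hHherm : H.IsHermitian := by
    rw [hHdef]; exact herm_H' w m α hw_symm hw_diag hm hα
  obtain ⟨P, hPdef⟩ : ∃ P : Matrix V {v : V // v ≠ v₂} ℂ,
      P = diagonal (fun v => (Real.sqrt (m v) : ℂ)) * Lmat hv *
        diagonal (fun j => ((Real.sqrt (mprime m v₁ v₂ j))⁻¹ : ℂ)) := ⟨_, rfl⟩
  obtain ⟨HB, hHBdef⟩ : ∃ HB : Matrix {v : V // v ≠ v₂} {v : V // v ≠ v₂} ℂ,
      HB = diagonal (fun j => (Real.sqrt (mprime m v₁ v₂ j) : ℂ)) * B *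
        diagonal (fun j => ((Real.sqrt (mprime m v₁ v₂ j))⁻¹ : ℂ)) := ⟨_, rfl⟩
  have hpair0 : ∀ (Mv : Matrix V {v : V // v ≠ v₂} ℂ) (ψ χ : {v : V // v ≠ v₂} → ℂ),
      star χ ⬝ᵥ ((Mvᴴ * Mv) *ᵥ ψ) = star (Mv *ᵥ χ) ⬝ᵥ (Mv *ᵥ ψ) := by
    intro Mv ψ χ
    rw [← Matrix.mulVec_mulVec, Matrix.dotProduct_mulVec (star χ) Mvᴴ, ← Matrix.star_mulVec]
  have hpair : ∀ (Mv : Matrix V {v : V // v ≠ v₂} ℂ) (A : Matrix V V ℂ)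
      (ψ χ : {v : V // v ≠ v₂} → ℂ),
      star χ ⬝ᵥ ((Mvᴴ * A * Mv) *ᵥ ψ) = star (Mv *ᵥ χ) ⬝ᵥ (A *ᵥ (Mv *ᵥ ψ)) := by
    intro Mv A ψ χ
    rw [← Matrix.mulVec_mulVec, ← Matrix.mulVec_mulVec,
      Matrix.dotProduct_mulVec (star χ) Mvᴴ, ← Matrix.star_mulVec]
  have hPv : ∀ (ψ : {v : V // v ≠ v₂} → ℂ), P *ᵥ ψ
      = diagonal (fun v => (Real.sqrt (m v) : ℂ)) *ᵥ (liftFun hv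
          (diagonal (fun j => ((Real.sqrt (mprime m v₁ v₂ j))⁻¹ : ℂ)) *ᵥ ψ)) := by
    intro ψ
    rw [hPdef, ← Matrix.mulVec_mulVec, ← Matrix.mulVec_mulVec, Lmat_mulVec']
  have hPP : Pᴴ * P = 1 := by
    apply pairing_ext'
    intro ψ χ
    rw [hpair0, hPv ψ, hPv χ, weighted_dot' m hm, merge_sum' hv m, Matrix.one_mulVec]
    simp only [mulVec_diagonal]
    rw [helper1' (mprime m v₁ v₂) hm' ψ χ]
    simp [dotProduct]
  have hHP : ∀ ψ : {v : V // v ≠ v₂} → ℂ, H *ᵥ (P *ᵥ ψ)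
      = diagonal (fun v => (Real.sqrt (m v) : ℂ)) *ᵥ (magLap w m α *ᵥ (liftFun hv
          (diagonal (fun j => ((Real.sqrt (mprime m v₁ v₂ j))⁻¹ : ℂ)) *ᵥ ψ))) := by
    intro ψ
    rw [hPv, hHdef, ← Matrix.mulVec_mulVec, ← Matrix.mulVec_mulVec,
      Matrix.mulVec_mulVec _ (diagonal fun v => ((Real.sqrt (m v))⁻¹ : ℂ)), hDViV,
      Matrix.one_mulVec]
  have hPHP : Pᴴ * H * P = HB := by
    apply pairing_ext'
    intro ψ χ
    rw [hpair P H ψ χ, hHP, hPv χ, weighted_dot' m hm,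
      ← hB (diagonal (fun j => ((Real.sqrt (mprime m v₁ v₂ j))⁻¹ : ℂ)) *ᵥ ψ)
        (diagonal (fun j => ((Real.sqrt (mprime m v₁ v₂ j))⁻¹ : ℂ)) *ᵥ χ),
      merge_sum' hv m]
    simp only [mulVec_diagonal]
    rw [helper2' (mprime m v₁ v₂) hm']
    rw [hHBdef, ← Matrix.mulVec_mulVec, ← Matrix.mulVec_mulVec]
    simp only [dotProduct, mulVec_diagonal, Pi.star_apply]
  have hHBherm : HB.IsHermitian := by
    rw [← hPHP]
    exact Matrix.isHermitian_conjTranspose_mul_mul P hHherm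
  -- spectral data
  obtain ⟨U, hUdef⟩ : ∃ U : Matrix V V ℂ,
      U = (hHherm.eigenvectorUnitary : Matrix V V ℂ) := ⟨_, rfl⟩
  have hU1 : U * Uᴴ = 1 := by
    have h := Matrix.mem_unitaryGroup_iff.mp (hHherm.eigenvectorUnitary).2
    rw [Matrix.star_eq_conjTranspose] at h
    rw [hUdef]
    exact h
  have hU2 : Uᴴ * U = 1 := by
    have h := Matrix.mem_unitaryGroup_iff'.mp (hHherm.eigenvectorUnitary).2
    rw [Matrix.star_eq_conjTranspose] at h
    rw [hUdef]
    exact h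
  have hHspec : H = U * diagonal (Complex.ofReal ∘ hHherm.eigenvalues) * Uᴴ := by
    have h := hHherm.spectral_theorem
    rw [Unitary.conjStarAlgAut_apply, Matrix.star_eq_conjTranspose] at h
    rw [hUdef]
    exact h
  obtain ⟨U', hU'def⟩ : ∃ U' : Matrix {v : V // v ≠ v₂} {v : V // v ≠ v₂} ℂ,
      U' = (hHBherm.eigenvectorUnitary : Matrix {v : V // v ≠ v₂} {v : V // v ≠ v₂} ℂ)
    := ⟨_, rfl⟩
  have hU'1 : U' * U'ᴴ = 1 := by
    have h := Matrix.mem_unitaryGroup_iff.mp (hHBherm.eigenvectorUnitary).2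
    rw [Matrix.star_eq_conjTranspose] at h
    rw [hU'def]
    exact h
  have hU'2 : U'ᴴ * U' = 1 := by
    have h := Matrix.mem_unitaryGroup_iff'.mp (hHBherm.eigenvectorUnitary).2
    rw [Matrix.star_eq_conjTranspose] at h
    rw [hU'def]
    exact h
  have hHBspec : HB = U' * diagonal (Complex.ofReal ∘ hHBherm.eigenvalues) * U'ᴴ := by
    have h := hHBherm.spectral_theorem
    rw [Unitary.conjStarAlgAut_apply, Matrix.star_eq_conjTranspose] at h
    rw [hU'def]
    exact h
  obtain ⟨lam, hlamdef⟩ : ∃ l : V → ℝ, l = hHherm.eigenvalues := ⟨_, rfl⟩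
  rw [← hlamdef] at hHspec
  obtain ⟨mu, hmudef⟩ : ∃ l : {v : V // v ≠ v₂} → ℝ, l = hHBherm.eigenvalues := ⟨_, rfl⟩
  rw [← hmudef] at hHBspec
  -- similarity for magLap
  have hΔsim : magLap w m α
      = (diagonal (fun v => ((Real.sqrt (m v))⁻¹ : ℂ)) * U)
        * diagonal (Complex.ofReal ∘ lam)
        * (Uᴴ * diagonal (fun v => (Real.sqrt (m v) : ℂ))) := by
    have h0 : diagonal (fun v => ((Real.sqrt (m v))⁻¹ : ℂ)) * H *
        diagonal (fun v => (Real.sqrt (m v) : ℂ)) = magLap w m α := by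
      rw [hHdef]
      simp only [Matrix.mul_assoc]
      rw [hDViV, Matrix.mul_one, ← Matrix.mul_assoc, hDViV, Matrix.one_mul]
    rw [← h0, hHspec]
    simp only [Matrix.mul_assoc]
  have hMM1 : (diagonal (fun v => ((Real.sqrt (m v))⁻¹ : ℂ)) * U)
      * (Uᴴ * diagonal (fun v => (Real.sqrt (m v) : ℂ))) = 1 := by
    simp only [Matrix.mul_assoc]
    rw [← Matrix.mul_assoc U, hU1, Matrix.one_mul, hDViV]
  have hMM2 : (Uᴴ * diagonal (fun v => (Real.sqrt (m v) : ℂ)))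
      * (diagonal (fun v => ((Real.sqrt (m v))⁻¹ : ℂ)) * U) = 1 := by
    simp only [Matrix.mul_assoc]
    rw [← Matrix.mul_assoc (diagonal fun v => (Real.sqrt (m v) : ℂ)), hDVVi, Matrix.one_mul, hU2]
  -- similarity for B
  have hBsim : B
      = (diagonal (fun j => ((Real.sqrt (mprime m v₁ v₂ j))⁻¹ : ℂ)) * U')
        * diagonal (Complex.ofReal ∘ mu)
        * (U'ᴴ * diagonal (fun j => (Real.sqrt (mprime m v₁ v₂ j) : ℂ))) := by
    have h0 : diagonal (fun j => ((Real.sqrt (mprime m v₁ v₂ j))⁻¹ : ℂ)) * HB *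
        diagonal (fun j => (Real.sqrt (mprime m v₁ v₂ j) : ℂ)) = B := by
      rw [hHBdef]
      simp only [Matrix.mul_assoc]
      rw [hDWiW, Matrix.mul_one, ← Matrix.mul_assoc, hDWiW, Matrix.one_mul]
    rw [← h0, hHBspec]
    simp only [Matrix.mul_assoc]
  have hNN1 : (diagonal (fun j : {v : V // v ≠ v₂} => ((Real.sqrt (mprime m v₁ v₂ j))⁻¹ : ℂ)) * U')
      * (U'ᴴ * diagonal (fun j => (Real.sqrt (mprime m v₁ v₂ j) : ℂ))) = 1 := by
    simp only [Matrix.mul_assoc]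
    rw [← Matrix.mul_assoc U', hU'1, Matrix.one_mul, hDWiW]
  have hNN2 : (U'ᴴ * diagonal (fun j : {v : V // v ≠ v₂} => (Real.sqrt (mprime m v₁ v₂ j) : ℂ)))
      * (diagonal (fun j => ((Real.sqrt (mprime m v₁ v₂ j))⁻¹ : ℂ)) * U') = 1 := by
    simp only [Matrix.mul_assoc]
    rw [← Matrix.mul_assoc (diagonal fun j : {v : V // v ≠ v₂} =>
      (Real.sqrt (mprime m v₁ v₂ j) : ℂ)), hDWWi, Matrix.one_mul, hU'2]
  obtain ⟨D, enD, hDmono, hdD, hlamD⟩ :=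
    lamk_of_diag' (magLap w m α) lam _ _ hMM1 hMM2 hΔsim
  obtain ⟨E, enE, hEmono, heE, hlamE⟩ :=
    lamk_of_diag' B mu _ _ hNN1 hNN2 hBsim
  -- the isometry Q and the conjugation identity
  obtain ⟨Q, hQdef⟩ : ∃ Q : Matrix V {v : V // v ≠ v₂} ℂ, Q = Uᴴ * P * U' := ⟨_, rfl⟩
  have hQH : Qᴴ = U'ᴴ * (Pᴴ * U) := by
    rw [hQdef, conjTranspose_mul, conjTranspose_mul, conjTranspose_conjTranspose]
  have hQ1 : Qᴴ * Q = 1 := by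
    rw [hQH, hQdef]
    simp only [Matrix.mul_assoc]
    rw [← Matrix.mul_assoc U, hU1, Matrix.one_mul, ← Matrix.mul_assoc Pᴴ, hPP,
      Matrix.one_mul, hU'2]
  have hDe : diagonal (Complex.ofReal ∘ mu)
      = Qᴴ * diagonal (Complex.ofReal ∘ lam) * Q := by
    have hrhs : Qᴴ * diagonal (Complex.ofReal ∘ lam) * Q
        = U'ᴴ * HB * U' := by
      rw [hQH, hQdef, ← hPHP, hHspec]
      simp only [Matrix.mul_assoc]
    rw [hrhs, hHBspec]
    simp only [Matrix.mul_assoc]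
    rw [hU'2, Matrix.mul_one, ← Matrix.mul_assoc, hU'2, Matrix.one_mul]
  intro k hk1 hk2
  have hk' : k - 1 < Fintype.card {v : V // v ≠ v₂} := by omega
  have hk1' : (k - 1) + 1 < Fintype.card V := by omega
  obtain ⟨h1, h2⟩ := diag_interlace' lam mu Q hQ1 hDe
    D E enD enE hDmono hEmono hdD heE hcardV' (k - 1) hk' hk1'
  constructor
  · rw [hlamD (k - 1) (by omega), hlamE (k - 1) hk']
    exact h1
  · rw [hlamE (k - 1) hk', hlamD k (by omega)]
    have hfin : (⟨(k - 1) + 1, hk1'⟩ : Fin (Fintype.card V)) = ⟨k, by omega⟩ := by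
      rw [Fin.ext_iff]
      show (k - 1) + 1 = k
      omega
    rw [← hfin]
    exact h2
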